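/- arXiv:1009.2522 — 3 statements merged into one kernel-verified Lean document; each statement's English description precedes it below -/
import Mathlib

section
/- Let f_Y be a Lebesgue probability density on ℝ with characteristic function φ_Y(ω) = ∫ e^{iωy} f_Y(y) dy, and let f_ε be a Lebesgue probability density with characteristic function φ_ε. Then for any ω, μ ∈ ℝ with φ_ε(ω) ≠ 0 and φ_ε(μ) ≠ 0, and any x₀ ∈ ℝ, one has the exact identity |φ_ε(ω)|² |φ_ε(μ)|² ∫_{−∞}^∞ Im{ e^{iω(y−x₀)}/φ_ε(ω) } · Im{ e^{iμ(y−x₀)}/φ_ε(μ) } f_Y(y) dy = (1/2) Re{ conj(φ_ε(ω)) · [ φ_ε(μ) φ_Y(ω−μ) e^{−i(ω−μ)x₀} − conj(φ_ε(μ)) φ_Y(ω+μ) e^{−i(ω+μ)x₀} ] }, where conj denotes complex conjugation. -/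
open MeasureTheory

/-- The characteristic function of a Lebesgue probability density `f` on `ℝ`:
`φ(ω) = ∫ e^{iωy} f(y) dy`. -/
noncomputable def charFunD (f : ℝ → ℝ) (ω : ℝ) : ℂ :=
  ∫ y : ℝ, Complex.exp (Complex.I * ω * y) * (f y : ℂ)

lemma him (z w : ℂ) : z.im * w.im = (1/2) * (((starRingEnd ℂ) z * w).re - (z*w).re) := by
  simp [Complex.mul_re, Complex.conj_re, Complex.conj_im]; ring

lemma habs (z e : ℂ) (hz : z ≠ 0) : (‖z‖)^2 * (e/z).im = ((starRingEnd ℂ) z * e).im := by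
  have hz' : Complex.normSq z ≠ 0 := by simpa [Complex.normSq_eq_norm_sq] using hz
  simp only [Complex.div_im, Complex.sq_norm, Complex.mul_im, Complex.conj_re, Complex.conj_im,
    Complex.normSq_apply] at *
  have hz'' : z.re ^ 2 + z.im ^ 2 ≠ 0 := by rw [sq, sq]; exact hz'
  field_simp
  ring

lemma key (C D e₁ e₂ : ℂ) (hC : C ≠ 0) (hD : D ≠ 0) :
    (‖C‖)^2 * (‖D‖)^2 * ((e₁/C).im * (e₂/D).im) =
      ((1/2 : ℂ) * (C * (starRingEnd ℂ) D * ((starRingEnd ℂ) e₁ * e₂)) -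
       (1/2 : ℂ) * (((starRingEnd ℂ) C * (starRingEnd ℂ) D) * (e₁*e₂))).re := by
  have h1 := habs C e₁ hC
  have h2 := habs D e₂ hD
  have h3 : (‖C‖)^2 * (‖D‖)^2 * ((e₁/C).im * (e₂/D).im)
      = ((starRingEnd ℂ) C * e₁).im * (((starRingEnd ℂ) D) * e₂).im := by
    rw [← h1, ← h2]; ring
  rw [h3, him]
  simp only [Complex.sub_re, Complex.mul_re, Complex.mul_im, Complex.conj_re, Complex.conj_im,
    Complex.one_re, Complex.one_im, Complex.div_re, Complex.div_im, Complex.normSq_apply,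
    Complex.re_ofNat, Complex.im_ofNat]
  ring

lemma integrable_exp_mul {f : ℝ → ℝ} (hf : Integrable f) (s : ℝ) :
    Integrable (fun y : ℝ => Complex.exp (Complex.I * s * y) * (f y : ℂ)) := by
  apply Integrable.bdd_mul (c := 1) hf.ofReal
  · exact (Continuous.cexp (by continuity)).aestronglyMeasurable
  · refine Filter.Eventually.of_forall (fun y => ?_)
    simp [Complex.norm_exp]

lemma conj_charFunD (f : ℝ → ℝ) (s : ℝ) :
    (starRingEnd ℂ) (charFunD f s) = ∫ y : ℝ, Complex.exp (Complex.I * ((-s : ℝ) : ℂ) * y) * (f y : ℂ) := by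
  rw [charFunD, ← integral_conj]
  congr 1 with y
  rw [map_mul, ← Complex.exp_conj]
  simp [Complex.conj_ofReal]

set_option maxHeartbeats 1000000

lemma half_re (z : ℂ) : ((1/2 : ℂ) * z).re = (1/2) * z.re := by
  simp [Complex.mul_re]

/-- the exact identity
`|φ_ε(ω)|²|φ_ε(μ)|² ∫ Im{e^{iω(y−x₀)}/φ_ε(ω)} Im{e^{iμ(y−x₀)}/φ_ε(μ)} f_Y(y) dy
 = (1/2) Re{ conj(φ_ε(ω)) [ φ_ε(μ) φ_Y(ω−μ) e^{−i(ω−μ)x₀}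
     − conj(φ_ε(μ)) φ_Y(ω+μ) e^{−i(ω+μ)x₀} ] }`. -/
theorem image_product_integral_identity (fY fε : ℝ → ℝ)
    (hfYm : Measurable fY) (hfY0 : ∀ y, 0 ≤ fY y) (hfY1 : ∫ y, fY y = 1)
    (hfεm : Measurable fε) (hfε0 : ∀ u, 0 ≤ fε u) (hfε1 : ∫ u, fε u = 1)
    (ω μ x₀ : ℝ) (hω : charFunD fε ω ≠ 0) (hμ : charFunD fε μ ≠ 0) :
    (‖charFunD fε ω‖) ^ 2 * (‖charFunD fε μ‖) ^ 2 *
        ∫ y : ℝ, (Complex.exp (Complex.I * ω * (y - x₀)) / charFunD fε ω).im *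
          (Complex.exp (Complex.I * μ * (y - x₀)) / charFunD fε μ).im * fY y =
      (1/2) * ((starRingEnd ℂ) (charFunD fε ω) *
        (charFunD fε μ * charFunD fY (ω - μ) * Complex.exp (-(Complex.I * (ω - μ) * x₀)) -
          (starRingEnd ℂ) (charFunD fε μ) * charFunD fY (ω + μ) *
            Complex.exp (-(Complex.I * (ω + μ) * x₀)))).re := by
  have hfY : Integrable fY := by
    by_contra h
    rw [integral_undef h] at hfY1
    norm_num at hfY1
  set C := charFunD fε ω with hCdef
  set D := charFunD fε μ with hDdef
  set k₁ : ℂ := (1/2 : ℂ) * (C * (starRingEnd ℂ) D * Complex.exp (Complex.I * (ω - μ) * x₀)) with hk₁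
  set k₂ : ℂ := (1/2 : ℂ) * ((starRingEnd ℂ) C * (starRingEnd ℂ) D *
      Complex.exp (-(Complex.I * (ω + μ) * x₀))) with hk₂
  set G : ℝ → ℂ := fun y =>
      k₁ * (Complex.exp (Complex.I * ((-(ω - μ) : ℝ) : ℂ) * y) * (fY y : ℂ)) -
      k₂ * (Complex.exp (Complex.I * (((ω + μ) : ℝ) : ℂ) * y) * (fY y : ℂ)) with hG
  have hi1 : Integrable (fun y : ℝ =>
      k₁ * (Complex.exp (Complex.I * ((-(ω - μ) : ℝ) : ℂ) * y) * (fY y : ℂ))) :=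
    (integrable_exp_mul hfY (-(ω - μ))).const_mul k₁
  have hi2 : Integrable (fun y : ℝ =>
      k₂ * (Complex.exp (Complex.I * (((ω + μ) : ℝ) : ℂ) * y) * (fY y : ℂ))) :=
    (integrable_exp_mul hfY (ω + μ)).const_mul k₂
  have hGi : Integrable G := hi1.sub hi2
  have step1 : (‖C‖) ^ 2 * (‖D‖) ^ 2 *
        (∫ y : ℝ, (Complex.exp (Complex.I * ω * (y - x₀)) / C).im *
          (Complex.exp (Complex.I * μ * (y - x₀)) / D).im * fY y)
      = ∫ y : ℝ, (G y).re := by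
    rw [← integral_const_mul]
    congr 1 with y
    set e₁ : ℂ := Complex.exp (Complex.I * ω * (y - x₀)) with he₁
    set e₂ : ℂ := Complex.exp (Complex.I * μ * (y - x₀)) with he₂
    have hc1 : (starRingEnd ℂ) e₁ * e₂ = Complex.exp (Complex.I * (ω - μ) * x₀) *
        Complex.exp (Complex.I * ((-(ω - μ) : ℝ) : ℂ) * y) := by
      rw [he₁, he₂, ← Complex.exp_conj, ← Complex.exp_add, ← Complex.exp_add]
      congr 1
      simp [Complex.conj_ofReal]
      push_cast
      ring
    have hc2 : e₁ * e₂ = Complex.exp (-(Complex.I * (ω + μ) * x₀)) *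
        Complex.exp (Complex.I * (((ω + μ) : ℝ) : ℂ) * y) := by
      rw [he₁, he₂, ← Complex.exp_add, ← Complex.exp_add]
      congr 1
      push_cast
      ring
    have hkey := key C D e₁ e₂ hω hμ
    calc (‖C‖) ^ 2 * (‖D‖) ^ 2 * ((e₁/C).im * (e₂/D).im * fY y)
        = ((‖C‖) ^ 2 * (‖D‖) ^ 2 * ((e₁/C).im * (e₂/D).im)) * fY y := by
          ring
      _ = ((1/2 : ℂ) * (C * (starRingEnd ℂ) D * ((starRingEnd ℂ) e₁ * e₂)) -
           (1/2 : ℂ) * (((starRingEnd ℂ) C * (starRingEnd ℂ) D) * (e₁*e₂))).re * fY y := by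
          rw [hkey]
      _ = (((1/2 : ℂ) * (C * (starRingEnd ℂ) D * ((starRingEnd ℂ) e₁ * e₂)) -
           (1/2 : ℂ) * (((starRingEnd ℂ) C * (starRingEnd ℂ) D) * (e₁*e₂))) * (fY y : ℂ)).re := by
          simp [Complex.mul_re]
      _ = (G y).re := by
          congr 1
          rw [hG, hc1, hc2, hk₁, hk₂]
          ring
  have step2 : ∫ y : ℝ, (G y).re = (∫ y : ℝ, G y).re := integral_re hGi
  have hint1 : ∫ y : ℝ, Complex.exp (Complex.I * ((-(ω - μ) : ℝ) : ℂ) * y) * (fY y : ℂ)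
      = (starRingEnd ℂ) (charFunD fY (ω - μ)) := (conj_charFunD fY (ω - μ)).symm
  have hint2 : ∫ y : ℝ, Complex.exp (Complex.I * (((ω + μ) : ℝ) : ℂ) * y) * (fY y : ℂ)
      = charFunD fY (ω + μ) := rfl
  have step3 : ∫ y : ℝ, G y
      = k₁ * (starRingEnd ℂ) (charFunD fY (ω - μ)) - k₂ * charFunD fY (ω + μ) := by
    rw [hG, integral_sub hi1 hi2, integral_const_mul, integral_const_mul, hint1, hint2]
  rw [step1, step2, step3]
  set φ₁ := charFunD fY (ω - μ)
  set φ₂ := charFunD fY (ω + μ)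
  have hE : Complex.exp (Complex.I * (ω - μ) * x₀)
      = (starRingEnd ℂ) (Complex.exp (-(Complex.I * (ω - μ) * x₀))) := by
    rw [← Complex.exp_conj]
    congr 1
    simp [Complex.conj_ofReal]
  have hX : k₁ * (starRingEnd ℂ) φ₁ = (starRingEnd ℂ) ((1/2 : ℂ) *
      ((starRingEnd ℂ) C * (D * φ₁ * Complex.exp (-(Complex.I * (ω - μ) * x₀))))) := by
    rw [hk₁, hE]
    simp only [map_mul, Complex.conj_conj, map_one, map_div₀, map_ofNat]
    ring
  have hY : k₂ * φ₂ = (1/2 : ℂ) * ((starRingEnd ℂ) C *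
      ((starRingEnd ℂ) D * φ₂ * Complex.exp (-(Complex.I * (ω + μ) * x₀)))) := by
    rw [hk₂]; ring
  rw [Complex.sub_re, hX, Complex.conj_re, hY, half_re, half_re]
  rw [show (starRingEnd ℂ) C * (D * φ₁ * Complex.exp (-(Complex.I * (ω - μ) * x₀)) -
      (starRingEnd ℂ) D * φ₂ * Complex.exp (-(Complex.I * (ω + μ) * x₀)))
    = (starRingEnd ℂ) C * (D * φ₁ * Complex.exp (-(Complex.I * (ω - μ) * x₀))) -
      (starRingEnd ℂ) C * ((starRingEnd ℂ) D * φ₂ * Complex.exp (-(Complex.I * (ω + μ) * x₀)))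
    from by ring, Complex.sub_re]
  ring
end

section
/- Let φ be the characteristic function of a probability density on ℝ (so |φ(ω)| ≤ 1 for all ω) satisfying |φ(ω)| ≥ 1 − b|ω|^τ for all |ω| ≤ ω₀, with constants ω₀, b, τ > 0. Then for every w with 0 < w ≤ ω₀ and 2b w^τ < 1, 0 ≤ ∫₀^w ( |φ(ω)|^{−2} − 1 ) ω^{−1} dω ≤ Σ_{k=1}^∞ (2b w^τ)^k/(τk) = −ln(1 − 2b w^τ)/τ. -/
open MeasureTheory

lemma charFunD_cont {f : ℝ → ℝ} (hfm : Measurable f) (hfi : Integrable f) :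
    Continuous (charFunD f) := by
  apply continuous_of_dominated (bound := fun y => |f y|)
  · intro ω
    exact ((Complex.continuous_exp.comp
      (by continuity : Continuous fun y : ℝ => Complex.I * ω * y)).measurable.mul
      (Complex.measurable_ofReal.comp hfm)).aestronglyMeasurable
  · intro ω
    filter_upwards with y
    rw [norm_mul, Complex.norm_exp]
    simp
  · exact hfi.abs
  · filter_upwards with y
    continuity

lemma charFunD_abs_le_one {f : ℝ → ℝ} (hf0 : ∀ y, 0 ≤ f y) (hf1 : ∫ y, f y = 1) (ω : ℝ) :
    ‖charFunD f ω‖ ≤ 1 := by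
  unfold charFunD
  calc ‖∫ y : ℝ, Complex.exp (Complex.I * ω * y) * (f y : ℂ)‖
      ≤ ∫ y : ℝ, ‖Complex.exp (Complex.I * ω * y) * (f y : ℂ)‖ :=
        norm_integral_le_integral_norm _
    _ = ∫ y : ℝ, f y := by
        apply integral_congr_ae
        filter_upwards with y
        rw [norm_mul, Complex.norm_exp]
        simp [abs_of_nonneg (hf0 y)]
    _ = 1 := hf1

/-- for the characteristic function `φ` of a probability density satisfying
`|φ(ω)| ≥ 1 − b|ω|^τ` for `|ω| ≤ ω₀`, and `0 < w ≤ ω₀` with `2b w^τ < 1`,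
`0 ≤ ∫₀^w (|φ(ω)|^{−2} − 1) ω^{−1} dω ≤ Σ_{k≥1} (2b w^τ)^k/(τk) = −ln(1 − 2b w^τ)/τ`. -/
theorem remainder_integral_bound (f : ℝ → ℝ)
    (hfm : Measurable f) (hf0 : ∀ y, 0 ≤ f y) (hf1 : ∫ y, f y = 1)
    (ω₀ b τ : ℝ) (hω₀ : 0 < ω₀) (hb : 0 < b) (hτ : 0 < τ)
    (hA2 : ∀ ω : ℝ, |ω| ≤ ω₀ → 1 - b * |ω| ^ τ ≤ ‖charFunD f ω‖)
    (w : ℝ) (hw0 : 0 < w) (hw : w ≤ ω₀) (hw1 : 2 * b * w ^ τ < 1) :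
    0 ≤ ∫ ω in (0:ℝ)..w, (((‖charFunD f ω‖) ^ 2)⁻¹ - 1) / ω ∧
    (∫ ω in (0:ℝ)..w, (((‖charFunD f ω‖) ^ 2)⁻¹ - 1) / ω) ≤
      ∑' k : ℕ, (2 * b * w ^ τ) ^ (k + 1) / (τ * (k + 1)) ∧
    (∑' k : ℕ, (2 * b * w ^ τ) ^ (k + 1) / (τ * (k + 1))) =
      -Real.log (1 - 2 * b * w ^ τ) / τ := by
  have hfi : Integrable f := by
    by_contra h
    rw [integral_undef h] at hf1; norm_num at hf1
  have hcont : Continuous fun ω => ‖charFunD f ω‖ :=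
    continuous_norm.comp (charFunD_cont hfm hfi)
  set x : ℝ := 2 * b * w ^ τ with hxdef
  have hwτ : 0 < w ^ τ := Real.rpow_pos_of_pos hw0 τ
  have hx0 : 0 < x := by positivity
  have hxlt : x < 1 := hw1
  set F : ℝ → ℝ := fun ω => (((‖charFunD f ω‖) ^ 2)⁻¹ - 1) / ω with hFdef
  set g : ℝ → ℝ := fun ω => 2 * b * ω ^ (τ - 1) / (1 - 2 * b * ω ^ τ) with hgdef
  -- basic pointwise facts on Ioc
  have hfacts : ∀ ω ∈ Set.Ioc (0:ℝ) w,
      0 < 1 - 2 * b * ω ^ τ ∧ 1 - x ≤ 1 - 2 * b * ω ^ τ ∧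
      1 - 2 * b * ω ^ τ ≤ (‖charFunD f ω‖) ^ 2 ∧
      ‖charFunD f ω‖ ≤ 1 := by
    intro ω hω
    have hωτ : ω ^ τ ≤ w ^ τ := Real.rpow_le_rpow hω.1.le hω.2 hτ.le
    have hωτ0 : 0 < ω ^ τ := Real.rpow_pos_of_pos hω.1 τ
    have hbω : 2 * b * ω ^ τ ≤ x := by
      rw [hxdef]; nlinarith
    have hden : 0 < 1 - 2 * b * ω ^ τ := by linarith
    have ha : 1 - b * ω ^ τ ≤ ‖charFunD f ω‖ := by
      have := hA2 ω (by rw [abs_of_pos hω.1]; linarith [hω.2])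
      rwa [abs_of_pos hω.1] at this
    have ha1 : ‖charFunD f ω‖ ≤ 1 := charFunD_abs_le_one hf0 hf1 ω
    have hnn : 0 ≤ 1 - b * ω ^ τ := by nlinarith
    refine ⟨hden, by linarith, ?_, ha1⟩
    nlinarith [sq_nonneg (b * ω ^ τ)]
  -- pointwise bound F ≤ g on Icc
  have hF0 : ∀ ω ∈ Set.Icc (0:ℝ) w, 0 ≤ F ω := by
    intro ω hω
    rcases eq_or_lt_of_le hω.1 with h | h
    · simp [hFdef, ← h]
    · obtain ⟨hden, -, ha2, ha1⟩ := hfacts ω ⟨h, hω.2⟩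
      have ha2pos : 0 < (‖charFunD f ω‖) ^ 2 := lt_of_lt_of_le hden ha2
      have hle1 : (‖charFunD f ω‖) ^ 2 ≤ 1 := by
        nlinarith [norm_nonneg (charFunD f ω)]
      have : (1:ℝ) ≤ ((‖charFunD f ω‖) ^ 2)⁻¹ := one_le_inv₀ ha2pos |>.2 <| by exact hle1
      apply div_nonneg (by linarith) h.le
  have hFg : ∀ ω ∈ Set.Icc (0:ℝ) w, F ω ≤ g ω := by
    intro ω hω
    rcases eq_or_lt_of_le hω.1 with h | h
    · simp only [hFdef, hgdef, ← h]
      rw [div_zero]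
      have h0 : (0:ℝ) ^ τ = 0 := Real.zero_rpow hτ.ne'
      rw [h0]
      have h1 : (0:ℝ) ≤ (0:ℝ) ^ (τ - 1) := Real.rpow_nonneg le_rfl _
      apply div_nonneg (by positivity) (by norm_num)
    · obtain ⟨hden, -, ha2, ha1⟩ := hfacts ω ⟨h, hω.2⟩
      have ha2pos : 0 < (‖charFunD f ω‖) ^ 2 := lt_of_lt_of_le hden ha2
      have h1 : ((‖charFunD f ω‖) ^ 2)⁻¹ - 1
          = (1 - (‖charFunD f ω‖) ^ 2) / (‖charFunD f ω‖) ^ 2 := by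
        field_simp
        rw [div_sub_one ha2pos.ne']
      have h2 : (1 - (‖charFunD f ω‖) ^ 2) / (‖charFunD f ω‖) ^ 2
          ≤ (2 * b * ω ^ τ) / (1 - 2 * b * ω ^ τ) := by
        apply div_le_div₀ (by positivity) (by linarith) hden ha2
      have h3 : F ω ≤ ((2 * b * ω ^ τ) / (1 - 2 * b * ω ^ τ)) / ω := by
        rw [hFdef]
        simp only
        rw [h1]
        gcongr
      calc F ω ≤ ((2 * b * ω ^ τ) / (1 - 2 * b * ω ^ τ)) / ω := h3
        _ = g ω := by
            rw [hgdef]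
            simp only
            rw [Real.rpow_sub h, Real.rpow_one]
            field_simp
  -- integrability
  have hrpow_int : IntervalIntegrable (fun ω : ℝ => ω ^ (τ - 1)) volume 0 w :=
    intervalIntegral.intervalIntegrable_rpow' (by linarith)
  have hg_meas : Measurable g := by
    apply Measurable.div
    · exact (measurable_id.pow_const (τ - 1) |>.const_mul _)
    · exact measurable_const.sub (measurable_id.pow_const τ |>.const_mul _)
  have hgbound : ∀ ω ∈ Set.Ioc (0:ℝ) w, ‖g ω‖ ≤ (2 * b / (1 - x)) * ω ^ (τ - 1) := by
    intro ω hω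
    obtain ⟨hden, hdenx, -, -⟩ := hfacts ω hω
    have hrp : 0 ≤ ω ^ (τ - 1) := Real.rpow_nonneg hω.1.le _
    rw [Real.norm_eq_abs, abs_of_nonneg (by positivity)]
    rw [hgdef]
    simp only
    rw [div_le_iff₀ hden]
    have h1x : 0 < 1 - x := by linarith
    calc 2 * b * ω ^ (τ - 1) = (2 * b / (1 - x)) * ω ^ (τ - 1) * (1 - x) := by
          field_simp
      _ ≤ (2 * b / (1 - x)) * ω ^ (τ - 1) * (1 - 2 * b * ω ^ τ) := by
          have : 0 ≤ 2 * b / (1 - x) * ω ^ (τ - 1) := by positivity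
          gcongr
  have hg_intOn : IntegrableOn g (Set.Ioc 0 w) := by
    have hbint : IntegrableOn (fun ω : ℝ => (2 * b / (1 - x)) * ω ^ (τ - 1)) (Set.Ioc 0 w) :=
      ((intervalIntegrable_iff_integrableOn_Ioc_of_le hw0.le).1 hrpow_int).const_mul _
    exact hbint.mono' hg_meas.aestronglyMeasurable.restrict
      ((ae_restrict_iff' measurableSet_Ioc).2 (Filter.Eventually.of_forall hgbound))
  have hg_int : IntervalIntegrable g volume 0 w :=
    (intervalIntegrable_iff_integrableOn_Ioc_of_le hw0.le).2 hg_intOn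
  have hF_meas : Measurable F := by
    apply Measurable.div
    · exact ((hcont.measurable.pow_const 2).inv).sub measurable_const
    · exact measurable_id
  have hF_intOn : IntegrableOn F (Set.Ioc 0 w) := by
    apply hg_intOn.mono' hF_meas.aestronglyMeasurable.restrict
    apply (ae_restrict_iff' measurableSet_Ioc).2
    filter_upwards with ω hω
    rw [Real.norm_eq_abs, abs_of_nonneg (hF0 ω ⟨hω.1.le, hω.2⟩)]
    exact hFg ω ⟨hω.1.le, hω.2⟩
  have hF_int : IntervalIntegrable F volume 0 w :=
    (intervalIntegrable_iff_integrableOn_Ioc_of_le hw0.le).2 hF_intOn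
  -- FTC for g
  have hcont_inner : Continuous fun ω : ℝ => 1 - 2 * b * ω ^ τ := by
    apply continuous_const.sub
    apply continuous_const.mul
    exact continuous_iff_continuousAt.2 fun y => Real.continuousAt_rpow_const y τ (Or.inr hτ.le)
  set H : ℝ → ℝ := fun ω => -Real.log (1 - 2 * b * ω ^ τ) / τ with hHdef
  have hdenIcc : ∀ ω ∈ Set.Icc (0:ℝ) w, 0 < 1 - 2 * b * ω ^ τ := by
    intro ω hω
    rcases eq_or_lt_of_le hω.1 with h | h
    · rw [← h, Real.zero_rpow hτ.ne']; norm_num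
    · exact (hfacts ω ⟨h, hω.2⟩).1
  have hcontH : ContinuousOn H (Set.Icc 0 w) := by
    intro ω hω
    apply ContinuousAt.continuousWithinAt
    apply ContinuousAt.div_const
    apply ContinuousAt.neg
    exact hcont_inner.continuousAt.log (hdenIcc ω hω).ne'
  have hderiv : ∀ ω ∈ Set.Ioo (0:ℝ) w, HasDerivAt H (g ω) ω := by
    intro ω hω
    have hden : 0 < 1 - 2 * b * ω ^ τ := hdenIcc ω ⟨hω.1.le, hω.2.le⟩
    have h1 : HasDerivAt (fun ω : ℝ => ω ^ τ) (τ * ω ^ (τ - 1)) ω :=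
      Real.hasDerivAt_rpow_const (Or.inl hω.1.ne')
    have h2 : HasDerivAt (fun ω : ℝ => 1 - 2 * b * ω ^ τ) (-(2 * b * (τ * ω ^ (τ - 1)))) ω := by
      simpa using ((h1.const_mul (2 * b)).const_sub 1)
    have h3 := (h2.log hden.ne').neg.div_const τ
    refine h3.congr_deriv ?_
    rw [hgdef]
    simp only
    field_simp
  have hFTC : ∫ ω in (0:ℝ)..w, g ω = H w - H 0 :=
    intervalIntegral.integral_eq_sub_of_hasDeriv_right_of_le hw0.le hcontH
      (fun y hy => (hderiv y hy).hasDerivWithinAt) hg_int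
  have hH0 : H 0 = 0 := by
    rw [hHdef]; simp [Real.zero_rpow hτ.ne']
  -- the tsum
  have hsum : HasSum (fun k : ℕ => x ^ (k + 1) / (τ * (k + 1))) (-Real.log (1 - x) / τ) := by
    have h := (Real.hasSum_pow_div_log_of_abs_lt_one
      (by rw [abs_of_pos hx0]; exact hxlt)).div_const τ
    have e : (fun k : ℕ => x ^ (k + 1) / (τ * (k + 1))) = fun i : ℕ => x ^ (i + 1) / (↑i + 1) / τ := by
      funext k
      push_cast
      rw [div_div, mul_comm τ]
    rw [e]; exact h
  refine ⟨intervalIntegral.integral_nonneg hw0.le hF0, ?_, hsum.tsum_eq⟩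
  rw [hsum.tsum_eq]
  calc (∫ ω in (0:ℝ)..w, F ω) ≤ ∫ ω in (0:ℝ)..w, g ω :=
        intervalIntegral.integral_mono_on hw0.le hF_int hg_int hFg
    _ = H w - H 0 := hFTC
    _ = -Real.log (1 - x) / τ := by rw [hH0, sub_zero]
end

section
/- For every x ≥ 0 and every c ∈ ℝ, | ∫₀^x sin(cω)/ω dω | ≤ 2; more precisely, the supremum over x > 0 of ∫₀^x (sin t)/t dt is strictly less than 1.85195, and the left-hand side above never exceeds this supremum. -/
open MeasureTheory

section SineIntegralAux

open intervalIntegral Real Set Nat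
open scoped Interval

private lemma f_abs_le_one (t : ℝ) : |Real.sin t / t| ≤ 1 := by
  rcases eq_or_ne t 0 with rfl | h
  · simp
  · rw [abs_div, div_le_one (abs_pos.mpr h)]
    exact Real.abs_sin_le_abs

private lemma f_intable (a b : ℝ) :
    IntervalIntegrable (fun t => Real.sin t / t) volume a b := by
  apply IntervalIntegrable.mono_fun' (g := fun _ => (1:ℝ)) intervalIntegrable_const
  · exact (Real.measurable_sin.div measurable_id).aestronglyMeasurable
  · exact Filter.Eventually.of_forall fun t => by
      simp only [Real.norm_eq_abs]; exact f_abs_le_one t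

private lemma fact_bound (k : ℕ) : Nat.factorial 19 * 20 ^ k ≤ Nat.factorial (2 * k + 19) := by
  induction k with
  | zero => simp
  | succ n ih =>
    have h1 : 2 * (n + 1) + 19 = (2 * n + 19) + 2 := by ring
    rw [h1, pow_succ, Nat.factorial_succ, Nat.factorial_succ]
    calc Nat.factorial 19 * (20 ^ n * 20) = 20 * (Nat.factorial 19 * 20 ^ n) := by ring
    _ ≤ 20 * Nat.factorial (2*n+19) := Nat.mul_le_mul_left _ ih
    _ ≤ ((2*n+19)+1+1) * (((2*n+19)+1) * Nat.factorial (2*n+19)) := by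
        have h20 : 20 ≤ ((2*n+19)+1+1) * ((2*n+19)+1) := by nlinarith
        calc 20 * Nat.factorial (2*n+19)
            ≤ (((2*n+19)+1+1) * ((2*n+19)+1)) * Nat.factorial (2*n+19) :=
              Nat.mul_le_mul_right _ h20
        _ = ((2*n+19)+1+1) * (((2*n+19)+1) * Nat.factorial (2*n+19)) := by ring

private lemma tail_term_bound {t : ℝ} (h0 : 0 ≤ t) (hsq : t ^ 2 ≤ 10) (k : ℕ) :
    |(-1:ℝ)^(k+9) * t^(2*(k+9)+1) / ((2*(k+9)+1)! : ℝ)| ≤ t^19 / ((19)! : ℝ) * (1/2)^k := by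
  have hnum : t ^ (2*(k+9)+1) ≤ t^19 * 10^k := by
    have he : t ^ (2*(k+9)+1) = t^19 * (t^2)^k := by
      rw [← pow_mul, ← pow_add]; ring_nf
    rw [he]
    exact mul_le_mul_of_nonneg_left (pow_le_pow_left₀ (sq_nonneg t) hsq k) (by positivity)
  have hden : ((19)! : ℝ) * 20^k ≤ ((2*(k+9)+1)! : ℝ) := by
    have h2 : 2*(k+9)+1 = 2*k+19 := by ring
    rw [h2]
    exact_mod_cast fact_bound k
  rw [abs_div, abs_mul, abs_pow, abs_neg, abs_one, one_pow, one_mul, abs_pow,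
    abs_of_nonneg h0, Nat.abs_cast]
  calc t ^ (2*(k+9)+1) / ((2*(k+9)+1)! : ℝ)
      ≤ (t^19 * 10^k) / (((19)! : ℝ) * 20^k) :=
        div_le_div₀ (by positivity) hnum (by positivity) hden
  _ = t^19 / ((19)! : ℝ) * (1/2)^k := by
      have h20 : (20:ℝ)^k = 2^k * 10^k := by rw [← mul_pow]; norm_num
      have h12 : ((1:ℝ)/2)^k = 1 / 2^k := by rw [div_pow, one_pow]
      rw [h20, h12]
      have : ((19)! : ℝ) ≠ 0 := by positivity
      field_simp

private lemma sin_le_poly {t : ℝ} (h0 : 0 ≤ t) (hπ : t ≤ π) :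
    Real.sin t ≤ (∑ k ∈ Finset.range 9, (-1:ℝ)^k * t^(2*k+1) / ((2*k+1)! : ℝ)) + t * 1e-7 := by
  have ht315 : t ≤ 3.15 := hπ.trans Real.pi_lt_d2.le
  have hsq : t ^ 2 ≤ 10 := by nlinarith
  have hs := Real.hasSum_sin t
  have hsum := hs.summable
  have hsplit := Summable.sum_add_tsum_nat_add 9 hsum
  rw [hs.tsum_eq] at hsplit
  have hgeo : Summable (fun k : ℕ => t^19 / ((19)! : ℝ) * (1/2)^k) :=
    (summable_geometric_two).mul_left _
  have htail_sum : Summable (fun k : ℕ => (-1:ℝ)^(k+9) * t^(2*(k+9)+1) / ((2*(k+9)+1)! : ℝ)) :=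
    (summable_nat_add_iff 9).mpr hsum
  have htail_le : (∑' k : ℕ, (-1:ℝ)^(k+9) * t^(2*(k+9)+1) / ((2*(k+9)+1)! : ℝ))
      ≤ t^19 / ((19)! : ℝ) * 2 := by
    calc (∑' k : ℕ, (-1:ℝ)^(k+9) * t^(2*(k+9)+1) / ((2*(k+9)+1)! : ℝ))
        ≤ ∑' k : ℕ, t^19 / ((19)! : ℝ) * (1/2)^k := by
          refine Summable.tsum_le_tsum (fun k => ?_) htail_sum hgeo
          exact le_trans (le_abs_self _) (tail_term_bound h0 hsq k)
    _ = t^19 / ((19)! : ℝ) * 2 := by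
        rw [tsum_mul_left, tsum_geometric_two]
  have hsmall : t^19 / ((19)! : ℝ) * 2 ≤ t * 1e-7 := by
    have h18 : t^18 ≤ (3.15:ℝ)^18 := pow_le_pow_left₀ h0 ht315 18
    have h19 : t^19 = t * t^18 := by ring
    rw [h19]
    have hf : ((19)! : ℝ) = 121645100408832000 := by norm_num [Nat.factorial]
    rw [hf]
    nlinarith [pow_nonneg h0 18]
  linarith [hsplit ▸ (by linarith [htail_le, hsmall] :
    (∑ k ∈ Finset.range 9, (-1:ℝ)^k * t^(2*k+1) / ((2*k+1)! : ℝ))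
      + (∑' k : ℕ, (-1:ℝ)^(k+9) * t^(2*(k+9)+1) / ((2*(k+9)+1)! : ℝ))
    ≤ (∑ k ∈ Finset.range 9, (-1:ℝ)^k * t^(2*k+1) / ((2*k+1)! : ℝ)) + t * 1e-7)]

private noncomputable def Q : ℝ → ℝ := fun t =>
  (∑ k ∈ Finset.range 9, ((-1:ℝ)^k / ((2*k+1)! : ℝ)) * t^(2*k)) + 1e-7

private lemma f_le_Q {t : ℝ} (h0 : 0 ≤ t) (hπ : t ≤ π) : Real.sin t / t ≤ Q t := by
  rcases eq_or_lt_of_le h0 with rfl | ht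
  · simp [Q, Finset.sum_range_succ]
    norm_num
  · have h := sin_le_poly h0 hπ
    rw [div_le_iff₀ ht]
    calc Real.sin t
        ≤ (∑ k ∈ Finset.range 9, (-1:ℝ)^k * t^(2*k+1) / ((2*k+1)! : ℝ)) + t * 1e-7 := h
    _ = Q t * t := by
        rw [Q, add_mul, Finset.sum_mul]
        congr 1
        · refine Finset.sum_congr rfl fun k _ => ?_
          rw [pow_succ]
          ring
        · ring

private lemma Q_intable (a b : ℝ) : IntervalIntegrable Q volume a b := by
  apply Continuous.intervalIntegrable
  unfold Q
  continuity

private lemma integral_Q : (∫ t in (0:ℝ)..π, Q t)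
    = (∑ k ∈ Finset.range 9, ((-1:ℝ)^k / ((2*k+1)! : ℝ)) * (π^(2*k+1) / ((2*k+1:ℕ) : ℝ)))
      + 1e-7 * π := by
  have hik : ∀ k : ℕ, IntervalIntegrable (fun t : ℝ => ((-1:ℝ)^k / ((2*k+1)! : ℝ)) * t^(2*k))
      volume 0 π := fun k => (Continuous.intervalIntegrable (by fun_prop) _ _)
  have hsum : IntervalIntegrable
      (fun t : ℝ => ∑ k ∈ Finset.range 9, ((-1:ℝ)^k / ((2*k+1)! : ℝ)) * t^(2*k)) volume 0 π :=
    Continuous.intervalIntegrable (continuous_finset_sum _ (fun k _ => by fun_prop)) _ _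
  unfold Q
  rw [integral_add hsum intervalIntegrable_const]
  rw [intervalIntegral.integral_finset_sum (fun k _ => hik k)]
  congr 1
  · refine Finset.sum_congr rfl fun k _ => ?_
    rw [intervalIntegral.integral_const_mul, integral_pow]
    congr 1
    rw [zero_pow (by omega)]
    push_cast
    ring
  · simp [mul_comm]

private lemma numeric :
    (∑ k ∈ Finset.range 9, ((-1:ℝ)^k / ((2*k+1)! : ℝ)) * (π^(2*k+1) / ((2*k+1:ℕ) : ℝ)))
      + 1e-7 * π ≤ 1.85194 := by
  have ha : (3.141592:ℝ) ≤ π := Real.pi_gt_d6.le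
  have hb : π ≤ (3.141593:ℝ) := Real.pi_lt_d6.le
  have hpos : (0:ℝ) ≤ π := Real.pi_pos.le
  have key : (∑ k ∈ Finset.range 9, ((-1:ℝ)^k / ((2*k+1)! : ℝ)) * (π^(2*k+1) / ((2*k+1:ℕ) : ℝ)))
      + 1e-7 * π
      = π/1 - π^3/18 + π^5/600 - π^7/35280 + π^9/3265920 - π^11/439084800
        + π^13/80951270400 - π^15/19615115520000 + π^17/6046686277632000 + 1e-7*π := by
    simp only [Finset.sum_range_succ, Finset.sum_range_zero]
    norm_num [Nat.factorial]
    ring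
  rw [key]
  have h3 : (3.141592:ℝ)^3 ≤ π^3 := pow_le_pow_left₀ (by norm_num) ha 3
  have h7 : (3.141592:ℝ)^7 ≤ π^7 := pow_le_pow_left₀ (by norm_num) ha 7
  have h11 : (3.141592:ℝ)^11 ≤ π^11 := pow_le_pow_left₀ (by norm_num) ha 11
  have h15 : (3.141592:ℝ)^15 ≤ π^15 := pow_le_pow_left₀ (by norm_num) ha 15
  have h5 : π^5 ≤ (3.141593:ℝ)^5 := pow_le_pow_left₀ hpos hb 5
  have h9 : π^9 ≤ (3.141593:ℝ)^9 := pow_le_pow_left₀ hpos hb 9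
  have h13 : π^13 ≤ (3.141593:ℝ)^13 := pow_le_pow_left₀ hpos hb 13
  have h17 : π^17 ≤ (3.141593:ℝ)^17 := pow_le_pow_left₀ hpos hb 17
  have final : (3.141593:ℝ)/1 - (3.141592:ℝ)^3/18 + (3.141593:ℝ)^5/600 - (3.141592:ℝ)^7/35280
      + (3.141593:ℝ)^9/3265920 - (3.141592:ℝ)^11/439084800 + (3.141593:ℝ)^13/80951270400
      - (3.141592:ℝ)^15/19615115520000 + (3.141593:ℝ)^17/6046686277632000
      + 1e-7*(3.141593:ℝ) ≤ 1.85194 := by norm_num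
  linarith

private lemma Si_pi_le : (∫ t in (0:ℝ)..π, Real.sin t / t) ≤ 1.85194 := by
  have h1 : (∫ t in (0:ℝ)..π, Real.sin t / t) ≤ ∫ t in (0:ℝ)..π, Q t :=
    intervalIntegral.integral_mono_on Real.pi_pos.le (f_intable 0 π) (Q_intable 0 π)
      (fun t ht => f_le_Q ht.1 ht.2)
  rw [integral_Q] at h1
  linarith [numeric]

private lemma tail_bounds {y : ℝ} (hy : π ≤ y) :
    -(2/π) ≤ (∫ t in π..y, Real.sin t / t) ∧ (∫ t in π..y, Real.sin t / t) ≤ 0 := by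
  have hπ0 : (0:ℝ) < π := Real.pi_pos
  have hy0 : (0:ℝ) < y := hπ0.trans_le hy
  have huIcc : [[π, y]] = Icc π y := uIcc_of_le hy
  have hne : ∀ t ∈ [[π, y]], t ≠ 0 := by
    intro t ht
    rw [huIcc] at ht
    exact (hπ0.trans_le ht.1).ne'
  have hnotmem : (0:ℝ) ∉ [[π, y]] := fun h => hne 0 h rfl
  have hu : ∀ t ∈ [[π, y]], HasDerivAt (fun x : ℝ => x⁻¹) (-((t:ℝ)^2)⁻¹) t := by
    intro t ht
    exact hasDerivAt_inv (hne t ht)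
  have hv : ∀ t ∈ [[π, y]], HasDerivAt (fun x : ℝ => -Real.cos x) (Real.sin t) t := by
    intro t _
    have := (Real.hasDerivAt_cos t).neg
    rw [neg_neg] at this
    exact this
  have hu' : IntervalIntegrable (fun t : ℝ => -((t:ℝ)^2)⁻¹) volume π y := by
    apply ContinuousOn.intervalIntegrable
    apply ContinuousOn.neg
    apply ContinuousOn.inv₀ (by fun_prop)
    intro t ht
    exact pow_ne_zero 2 (hne t ht)
  have hv' : IntervalIntegrable (fun t : ℝ => Real.sin t) volume π y :=
    Continuous.intervalIntegrable Real.continuous_sin _ _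
  have hibp := integral_mul_deriv_eq_deriv_mul hu hv hu' hv'
  have heq : (∫ t in π..y, Real.sin t / t) = ∫ t in π..y, t⁻¹ * Real.sin t := by
    apply intervalIntegral.integral_congr
    intro t _
    simp only [div_eq_inv_mul]
  rw [heq, hibp]
  set J := ∫ t in π..y, -((t:ℝ)^2)⁻¹ * -Real.cos t with hJ
  have hJabs : |J| ≤ π⁻¹ - y⁻¹ := by
    have hJ2 : J = ∫ t in π..y, ((t:ℝ)^2)⁻¹ * Real.cos t := by
      rw [hJ]
      apply intervalIntegral.integral_congr
      intro t _
      ring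
    have hint2 : (∫ t in π..y, ((t:ℝ)^2)⁻¹) = π⁻¹ - y⁻¹ := by
      have hz : (∫ t in π..y, (t:ℝ)^(-2 : ℤ)) = (y^(-1:ℤ) - π^(-1:ℤ))/((-2:ℤ)+1) := by
        rw [integral_zpow (Or.inr ⟨by norm_num, hnotmem⟩)]
        norm_num
      have : (∫ t in π..y, ((t:ℝ)^2)⁻¹) = ∫ t in π..y, (t:ℝ)^(-2 : ℤ) := by
        apply intervalIntegral.integral_congr
        intro t _
        show ((t:ℝ)^2)⁻¹ = (t:ℝ)^(-2 : ℤ)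
        rw [zpow_neg]
        norm_cast
      rw [this, hz]
      push_cast
      field_simp
      ring
    rw [hJ2]
    calc |∫ t in π..y, ((t:ℝ)^2)⁻¹ * Real.cos t| ≤ ∫ t in π..y, |((t:ℝ)^2)⁻¹ * Real.cos t| :=
          intervalIntegral.abs_integral_le_integral_abs hy
    _ ≤ ∫ t in π..y, ((t:ℝ)^2)⁻¹ := by
        apply intervalIntegral.integral_mono_on hy
        · apply IntervalIntegrable.abs
          apply ContinuousOn.intervalIntegrable
          apply ContinuousOn.mul _ (by fun_prop)
          apply ContinuousOn.inv₀ (by fun_prop)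
          intro t ht
          exact pow_ne_zero 2 (hne t (huIcc ▸ ht))
        · apply ContinuousOn.intervalIntegrable
          apply ContinuousOn.inv₀ (by fun_prop)
          intro t ht
          exact pow_ne_zero 2 (hne t (huIcc ▸ ht))
        · intro t ht
          rw [abs_mul]
          have h1 : |((t:ℝ)^2)⁻¹| = ((t:ℝ)^2)⁻¹ := abs_of_nonneg (by positivity)
          rw [h1]
          calc ((t:ℝ)^2)⁻¹ * |Real.cos t| ≤ ((t:ℝ)^2)⁻¹ * 1 :=
                mul_le_mul_of_nonneg_left (Real.abs_cos_le_one t) (by positivity)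
          _ = ((t:ℝ)^2)⁻¹ := mul_one _
    _ = π⁻¹ - y⁻¹ := hint2
  have hJle : -(π⁻¹ - y⁻¹) ≤ J ∧ J ≤ π⁻¹ - y⁻¹ := abs_le.mp hJabs
  have hcosy : -1 ≤ Real.cos y ∧ Real.cos y ≤ 1 := ⟨Real.neg_one_le_cos y, Real.cos_le_one y⟩
  have hcπ : Real.cos π = -1 := Real.cos_pi
  rw [hcπ]
  constructor
  · have h1 : -(y⁻¹) ≤ y⁻¹ * -Real.cos y := by
      rw [neg_le, ← mul_neg, neg_neg]
      calc y⁻¹ * Real.cos y ≤ y⁻¹ * 1 := mul_le_mul_of_nonneg_left hcosy.2 (by positivity)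
      _ = y⁻¹ := mul_one _
    have h2 : π⁻¹ * -(-1:ℝ) = π⁻¹ := by ring
    rw [h2]
    have := hJle.2
    have hfrac : -(2/π) = -(y⁻¹) - π⁻¹ - (π⁻¹ - y⁻¹) := by
      field_simp
      ring
    linarith
  · have h1 : y⁻¹ * -Real.cos y ≤ y⁻¹ := by
      calc y⁻¹ * -Real.cos y ≤ y⁻¹ * 1 := by
            apply mul_le_mul_of_nonneg_left _ (by positivity)
            linarith [hcosy.1]
      _ = y⁻¹ := mul_one _
    have h2 : π⁻¹ * -(-1:ℝ) = π⁻¹ := by ring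
    rw [h2]
    linarith [hJle.1]

private lemma Si_pi_ge : 2/π ≤ ∫ t in (0:ℝ)..π, Real.sin t / t := by
  have hπ0 : (0:ℝ) < π := Real.pi_pos
  have h1 : (∫ t in (0:ℝ)..π, Real.sin t / π) ≤ ∫ t in (0:ℝ)..π, Real.sin t / t := by
    apply intervalIntegral.integral_mono_on hπ0.le
    · exact (Real.continuous_sin.div_const π).intervalIntegrable _ _
    · exact f_intable 0 π
    · intro t ht
      rcases eq_or_lt_of_le ht.1 with rfl | htpos
      · simp
      · exact div_le_div_of_nonneg_left (Real.sin_nonneg_of_nonneg_of_le_pi ht.1 ht.2) htpos ht.2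
  have h2 : (∫ t in (0:ℝ)..π, Real.sin t / π) = 2/π := by
    rw [intervalIntegral.integral_div, integral_sin]
    norm_num
  linarith

private lemma Si_bounds {y : ℝ} (h0 : 0 ≤ y) :
    0 ≤ (∫ t in (0:ℝ)..y, Real.sin t / t) ∧ (∫ t in (0:ℝ)..y, Real.sin t / t) ≤ 1.85194 := by
  rcases le_or_gt y π with hyπ | hyπ
  · constructor
    · apply intervalIntegral.integral_nonneg h0
      intro t ht
      exact div_nonneg (Real.sin_nonneg_of_nonneg_of_le_pi ht.1 (ht.2.trans hyπ)) ht.1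
    · have hsub : (∫ t in (0:ℝ)..π, Real.sin t / t) - (∫ t in (0:ℝ)..y, Real.sin t / t)
          = ∫ t in y..π, Real.sin t / t :=
        intervalIntegral.integral_interval_sub_left (f_intable 0 π) (f_intable 0 y)
      have hpos : 0 ≤ ∫ t in y..π, Real.sin t / t := by
        apply intervalIntegral.integral_nonneg hyπ
        intro t ht
        exact div_nonneg (Real.sin_nonneg_of_nonneg_of_le_pi (h0.trans ht.1) ht.2) (h0.trans ht.1)
      linarith [Si_pi_le]
  · have hadd : (∫ t in (0:ℝ)..π, Real.sin t / t) + (∫ t in π..y, Real.sin t / t)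
        = ∫ t in (0:ℝ)..y, Real.sin t / t :=
      intervalIntegral.integral_add_adjacent_intervals (f_intable 0 π) (f_intable π y)
    have ht := tail_bounds hyπ.le
    constructor
    · linarith [Si_pi_ge, ht.1]
    · linarith [Si_pi_le, ht.2]

private lemma subst_pos {x c : ℝ} (hc : 0 < c) :
    (∫ t in (0:ℝ)..x, Real.sin (c*t)/t) = ∫ t in (0:ℝ)..(c*x), Real.sin t / t := by
  have h1 : ∀ t : ℝ, Real.sin (c*t)/t = c * (Real.sin (c*t)/(c*t)) := by
    intro t
    rcases eq_or_ne t 0 with rfl | h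
    · simp
    · field_simp
  simp only [h1]
  rw [intervalIntegral.integral_const_mul]
  rw [intervalIntegral.integral_comp_mul_left (fun u => Real.sin u / u) hc.ne']
  simp only [mul_zero, smul_eq_mul]
  rw [← mul_assoc, mul_inv_cancel₀ hc.ne', one_mul]

end SineIntegralAux

/-- for every `x ≥ 0` and `c ∈ ℝ`, `|∫₀^x sin(cω)/ω dω| ≤ 2`; more precisely,
the supremum over `x > 0` of the sine integral `Si(x) = ∫₀^x (sin t)/t dt` is strictly less
than `1.85195`, and `|∫₀^x sin(cω)/ω dω|` never exceeds this supremum. -/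
theorem sine_integral_bound :
    (∀ x : ℝ, 0 ≤ x → ∀ c : ℝ, |∫ t in (0:ℝ)..x, Real.sin (c * t) / t| ≤ 2) ∧
    sSup ((fun x : ℝ => ∫ t in (0:ℝ)..x, Real.sin t / t) '' Set.Ioi 0) < 1.85195 ∧
    (∀ x : ℝ, 0 ≤ x → ∀ c : ℝ, |∫ t in (0:ℝ)..x, Real.sin (c * t) / t| ≤
      sSup ((fun x : ℝ => ∫ t in (0:ℝ)..x, Real.sin t / t) '' Set.Ioi 0)) := by
  set img := (fun x : ℝ => ∫ t in (0:ℝ)..x, Real.sin t / t) '' Set.Ioi 0 with himg_def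
  have himg : ∀ z ∈ img, z ≤ 1.85194 := by
    rintro z ⟨x, hx, rfl⟩
    exact (Si_bounds (le_of_lt hx)).2
  have hbdd : BddAbove img := ⟨1.85194, himg⟩
  have hSle : sSup img ≤ 1.85194 := Real.sSup_le himg (by norm_num)
  have hmemπ : (∫ t in (0:ℝ)..Real.pi, Real.sin t / t) ∈ img :=
    ⟨Real.pi, Real.pi_pos, rfl⟩
  have hS0 : 0 ≤ sSup img := le_trans (Si_bounds Real.pi_pos.le).1 (le_csSup hbdd hmemπ)
  have key : ∀ y : ℝ, 0 ≤ y → (∫ t in (0:ℝ)..y, Real.sin t / t) ≤ sSup img := by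
    intro y hy
    rcases eq_or_lt_of_le hy with rfl | hy'
    · simpa using hS0
    · exact le_csSup hbdd ⟨y, hy', rfl⟩
  have main3 : ∀ x : ℝ, 0 ≤ x → ∀ c : ℝ,
      |∫ t in (0:ℝ)..x, Real.sin (c * t) / t| ≤ sSup img := by
    intro x hx c
    rcases lt_trichotomy c 0 with hc | rfl | hc
    · have hneg : (∫ t in (0:ℝ)..x, Real.sin (c*t)/t)
          = -∫ t in (0:ℝ)..x, Real.sin ((-c)*t)/t := by
        rw [← intervalIntegral.integral_neg]
        apply intervalIntegral.integral_congr
        intro t _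
        show Real.sin (c*t)/t = -(Real.sin (-c*t)/t)
        rw [neg_mul, Real.sin_neg]
        ring
      rw [hneg, abs_neg, subst_pos (neg_pos.mpr hc)]
      have h0 : 0 ≤ -c * x := mul_nonneg (neg_pos.mpr hc).le hx
      rw [abs_of_nonneg (Si_bounds h0).1]
      exact key _ h0
    · simpa using hS0
    · rw [subst_pos hc]
      have h0 : 0 ≤ c * x := mul_nonneg hc.le hx
      rw [abs_of_nonneg (Si_bounds h0).1]
      exact key _ h0
  exact ⟨fun x hx c => (main3 x hx c).trans (hSle.trans (by norm_num)),
    lt_of_le_of_lt hSle (by norm_num), main3⟩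
end
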